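/- The Ellis–Bronnikov wormhole solves the wormhole system: let b > 0 and take parameters ℓ = 0, μ = 0, ω = 0 and Λ = 0. Then the functions a(r) = 1, f(r) = b² + r², and χ(r) = √(8π)·arctan(r/b), defined for all r ∈ ℝ, satisfy the field equations (E1), (E2), (E3) and the constraint (C) at every r ∈ ℝ. -/

import Mathlib

open Real Filter

noncomputable section

/-- `Λ̃ = (2ℓ+1)Λ/(4π)`. -/
def lamT (Λ : ℝ) (ℓ : ℕ) : ℝ := (2 * (ℓ : ℝ) + 1) * Λ / (4 * Real.pi)

/-- Field equation (E1):
`χ'' = -(f'/f + a'/a)·χ' + (1/a)·[μ² - ω²/a + ℓ(ℓ+1)/f - 2Λ̃χ²]·χ`. -/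
def EqE1 (μ ω Λ : ℝ) (ℓ : ℕ) (χ a f : ℝ → ℝ) (r : ℝ) : Prop :=
  deriv (deriv χ) r =
    -(deriv f r / f r + deriv a r / a r) * deriv χ r +
      (1 / a r) *
        (μ ^ 2 - ω ^ 2 / a r + (ℓ : ℝ) * ((ℓ : ℝ) + 1) / f r
          - 2 * lamT Λ ℓ * χ r ^ 2) * χ r

/-- Field equation (E2):
`a'' = -(f'/f)·a' + ((2ℓ+1)/(4π))·[μ² - 2ω²/a - Λ̃χ²]·χ²`. -/
def EqE2 (μ ω Λ : ℝ) (ℓ : ℕ) (χ a f : ℝ → ℝ) (r : ℝ) : Prop :=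
  deriv (deriv a) r =
    -(deriv f r / f r) * deriv a r +
      ((2 * (ℓ : ℝ) + 1) / (4 * Real.pi)) *
        (μ ^ 2 - 2 * ω ^ 2 / a r - lamT Λ ℓ * χ r ^ 2) * χ r ^ 2

/-- Field equation (E3):
`f'' = (1/a)·(-a'·f' + 2 + ((2ℓ+1)/(4π))·[(μ² - Λ̃χ²)·f + ℓ(ℓ+1)]·χ²)`. -/
def EqE3 (μ ω Λ : ℝ) (ℓ : ℕ) (χ a f : ℝ → ℝ) (r : ℝ) : Prop :=
  deriv (deriv f) r =
    (1 / a r) *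
      (-(deriv a r) * deriv f r + 2 +
        ((2 * (ℓ : ℝ) + 1) / (4 * Real.pi)) *
          ((μ ^ 2 - lamT Λ ℓ * χ r ^ 2) * f r + (ℓ : ℝ) * ((ℓ : ℝ) + 1)) * χ r ^ 2)

/-- Constraint (C):
`(f'/(2f))·(a' + a·f'/(2f)) - 1/f
  = ((2ℓ+1)/(8π))·[-a·χ'² + (μ² - Λ̃χ² - ω²/a + ℓ(ℓ+1)/f)·χ²]`. -/
def EqC (μ ω Λ : ℝ) (ℓ : ℕ) (χ a f : ℝ → ℝ) (r : ℝ) : Prop :=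
  (deriv f r / (2 * f r)) * (deriv a r + a r * deriv f r / (2 * f r)) - 1 / f r =
    ((2 * (ℓ : ℝ) + 1) / (8 * Real.pi)) *
      (-(a r) * deriv χ r ^ 2 +
        (μ ^ 2 - lamT Λ ℓ * χ r ^ 2 - ω ^ 2 / a r
          + (ℓ : ℝ) * ((ℓ : ℝ) + 1) / f r) * χ r ^ 2)

lemma fsq_pos (b : ℝ) (hb : 0 < b) (s : ℝ) : 0 < b ^ 2 + s ^ 2 := by positivity

lemma hasDerivAt_chi (b : ℝ) (hb : 0 < b) (s : ℝ) :
    HasDerivAt (fun s => Real.sqrt (8 * Real.pi) * Real.arctan (s / b))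
      (Real.sqrt (8 * Real.pi) * (b / (b ^ 2 + s ^ 2))) s := by
  have h1 : HasDerivAt (fun s : ℝ => s / b) (1 / b) s := (hasDerivAt_id s).div_const b
  have h2 := (Real.hasDerivAt_arctan (s / b)).comp s h1
  have h3 := h2.const_mul (Real.sqrt (8 * Real.pi))
  refine h3.congr_deriv ?_
  have hb' : b ≠ 0 := ne_of_gt hb
  field_simp

lemma deriv_chi (b : ℝ) (hb : 0 < b) :
    deriv (fun s => Real.sqrt (8 * Real.pi) * Real.arctan (s / b))
      = fun s => Real.sqrt (8 * Real.pi) * (b / (b ^ 2 + s ^ 2)) := by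
  ext s; exact (hasDerivAt_chi b hb s).deriv

lemma deriv_chi' (b : ℝ) (hb : 0 < b) (s : ℝ) :
    HasDerivAt (fun s => Real.sqrt (8 * Real.pi) * (b / (b ^ 2 + s ^ 2)))
      (Real.sqrt (8 * Real.pi) * (-(b * (2 * s)) / (b ^ 2 + s ^ 2) ^ 2)) s := by
  have hne : b ^ 2 + s ^ 2 ≠ 0 := ne_of_gt (fsq_pos b hb s)
  have h1 : HasDerivAt (fun s : ℝ => b ^ 2 + s ^ 2) (2 * s) s := by
    simpa using ((hasDerivAt_pow 2 s).const_add (b ^ 2))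
  have h2 := (hasDerivAt_const s b).div h1 hne
  have h3 := h2.const_mul (Real.sqrt (8 * Real.pi))
  refine h3.congr_deriv ?_
  field_simp
  ring

lemma deriv_f (b : ℝ) : deriv (fun s : ℝ => b ^ 2 + s ^ 2) = fun s => 2 * s := by
  ext s
  simpa using (((hasDerivAt_pow 2 s).const_add (b ^ 2))).deriv

/-- the Ellis–Bronnikov wormhole `a = 1`, `f = b² + r²`,
`χ = √(8π)·arctan(r/b)` solves (E1), (E2), (E3) and (C) with parameters
`ℓ = 0`, `μ = 0`, `ω = 0`, `Λ = 0`. -/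
theorem ellis_bronnikov_solves_system (b : ℝ) (hb : 0 < b) (r : ℝ) :
    EqE1 0 0 0 0 (fun s => Real.sqrt (8 * Real.pi) * Real.arctan (s / b))
        (fun _ => 1) (fun s => b ^ 2 + s ^ 2) r ∧
    EqE2 0 0 0 0 (fun s => Real.sqrt (8 * Real.pi) * Real.arctan (s / b))
        (fun _ => 1) (fun s => b ^ 2 + s ^ 2) r ∧
    EqE3 0 0 0 0 (fun s => Real.sqrt (8 * Real.pi) * Real.arctan (s / b))
        (fun _ => 1) (fun s => b ^ 2 + s ^ 2) r ∧
    EqC 0 0 0 0 (fun s => Real.sqrt (8 * Real.pi) * Real.arctan (s / b))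
        (fun _ => 1) (fun s => b ^ 2 + s ^ 2) r := by
  have hπ := Real.pi_pos
  have hne : b ^ 2 + r ^ 2 ≠ 0 := ne_of_gt (fsq_pos b hb r)
  have hχ1 := deriv_chi b hb
  have hχ2 : deriv (deriv (fun s => Real.sqrt (8 * Real.pi) * Real.arctan (s / b))) r
      = Real.sqrt (8 * Real.pi) * (-(b * (2 * r)) / (b ^ 2 + r ^ 2) ^ 2) := by
    rw [hχ1]; exact (deriv_chi' b hb r).deriv
  have hf1 := deriv_f b
  have hf2 : deriv (deriv (fun s : ℝ => b ^ 2 + s ^ 2)) r = 2 := by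
    rw [hf1]
    simpa using (((hasDerivAt_id r).const_mul (2:ℝ))).deriv
  have ha1 : deriv (fun _ : ℝ => (1:ℝ)) = fun _ => 0 := by
    ext s; simp
  have ha2 : deriv (deriv (fun _ : ℝ => (1:ℝ))) r = 0 := by rw [ha1]; simp
  have hsq : Real.sqrt (8 * Real.pi) ^ 2 = 8 * Real.pi := Real.sq_sqrt (by positivity)
  refine ⟨?_, ?_, ?_, ?_⟩
  · unfold EqE1 lamT
    rw [hχ2, hχ1, hf1, ha1]
    simp only [Nat.cast_zero]
    field_simp
    ring
  · unfold EqE2 lamT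
    rw [hf1, ha1]
    simp
  · unfold EqE3 lamT
    rw [hf2, ha1]
    simp
  · unfold EqC lamT
    rw [hχ1, hf1, ha1]
    simp only [Nat.cast_zero]
    rw [mul_pow, hsq]
    field_simp
    ring
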